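/- Define tH_KSs^{2+5/4}(δ; t; q₁,p₁,q₂,p₂) = tH_{III(D7)}(δ;t;q₁,p₁) + tH_{III(D7)}(δ;t;q₂,p₂) − t(2p₂/q₁ + p₁ + p₂) with tH_{III(D7)}(a;t;q,p) = p²q² + aqp + tp + q, and define tH_KSs^{3/2+5/4}(t; q₁,p₁,q₂,p₂) = tH_{III(D8)}(t;q₁,p₁) + tH_{III(D8)}(t;q₂,p₂) − 2q₁q₂/t + q₁ + q₂ with tH_{III(D8)}(t;q,p) = p²q² + qp − q − t/q. Then under the substitution q₁ = −t̃/q̃₂, p₁ = (q̃₂/t̃)(p̃₂q̃₂ − ε⁻¹), q₂ = −t̃/q̃₁, p₂ = (q̃₁/t̃)(p̃₁q̃₁ − ε⁻¹), t = ε t̃, δ = −2ε⁻¹, one has lim_{ε→0} [ t·H_KSs^{2+5/4}(δ; t; q₁,p₁,q₂,p₂) + p̃₁q̃₁ + p̃₂q̃₂ + 2ε⁻² ] = t̃·H_KSs^{3/2+5/4}(t̃; q̃₁,p̃₁,q̃₂,p̃₂). -/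
import Mathlib


/-- `t·H_{III(D7)}(a;t;q,p) = p²q² + aqp + tp + q`. -/
def tHIIID7 (a t q p : ℂ) : ℂ := p ^ 2 * q ^ 2 + a * q * p + t * p + q

/-- `t·H_{III(D8)}(t;q,p) = p²q² + qp − q − t/q`. -/
noncomputable def tHIIID8 (t q p : ℂ) : ℂ := p ^ 2 * q ^ 2 + q * p - q - t / q

/-- `t·H_KSs^{2+5/4}(δ;t;q₁,p₁,q₂,p₂)`. -/
noncomputable def tHKSs_2_54 (δ t q1 p1 q2 p2 : ℂ) : ℂ :=
  tHIIID7 δ t q1 p1 + tHIIID7 δ t q2 p2 - t * (2 * p2 / q1 + p1 + p2)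

/-- `t·H_KSs^{3/2+5/4}(t;q₁,p₁,q₂,p₂)`. -/
noncomputable def tHKSs_32_54 (t q1 p1 q2 p2 : ℂ) : ℂ :=
  tHIIID8 t q1 p1 + tHIIID8 t q2 p2 - 2 * q1 * q2 / t + q1 + q2

set_option maxHeartbeats 2000000 in
/-- Degeneration `2+5/4 → 3/2+5/4`: under `q₁ = −t̃/q̃₂`, `p₁ = (q̃₂/t̃)(p̃₂q̃₂ − ε⁻¹)`,
`q₂ = −t̃/q̃₁`, `p₂ = (q̃₁/t̃)(p̃₁q̃₁ − ε⁻¹)`, `t = εt̃`, `δ = −2ε⁻¹`, the quantity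
`t·H_KSs^{2+5/4} + p̃₁q̃₁ + p̃₂q̃₂ + 2ε⁻²` tends, as `ε → 0`, to
`t̃·H_KSs^{3/2+5/4}(t̃;q̃₁,p̃₁,q̃₂,p̃₂)`. -/
theorem degeneration_2_54_to_32_54 (tt q1 p1 q2 p2 : ℂ)
    (htt : tt ≠ 0) (hq1 : q1 ≠ 0) (hq2 : q2 ≠ 0) :
    Filter.Tendsto
      (fun ε : ℂ =>
        tHKSs_2_54 (-(2 * ε⁻¹)) (ε * tt) (-(tt / q2)) (q2 / tt * (p2 * q2 - ε⁻¹))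
            (-(tt / q1)) (q1 / tt * (p1 * q1 - ε⁻¹))
          + p1 * q1 + p2 * q2 + 2 * (ε ^ 2)⁻¹)
      (nhdsWithin 0 {ε : ℂ | ε ≠ 0})
      (nhds (tHKSs_32_54 tt q1 p1 q2 p2)) := by
  have key : ∀ ε : ℂ, ε ≠ 0 →
      (tHKSs_2_54 (-(2 * ε⁻¹)) (ε * tt) (-(tt / q2)) (q2 / tt * (p2 * q2 - ε⁻¹))
            (-(tt / q1)) (q1 / tt * (p1 * q1 - ε⁻¹))
          + p1 * q1 + p2 * q2 + 2 * (ε ^ 2)⁻¹)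
        = tHKSs_32_54 tt q1 p1 q2 p2 + ε * (2 * p1 * q1 ^ 2 * q2 / tt) := by
    intro ε hε
    have hx : ε * ε⁻¹ = 1 := mul_inv_cancel₀ hε
    have ht : tt * tt⁻¹ = 1 := mul_inv_cancel₀ htt
    have h1 : q1 * q1⁻¹ = 1 := mul_inv_cancel₀ hq1
    have h2 : q2 * q2⁻¹ = 1 := mul_inv_cancel₀ hq2
    simp only [tHKSs_2_54, tHKSs_32_54, tHIIID7, tHIIID8, div_eq_mul_inv, mul_inv, inv_inv, inv_neg, ← inv_pow]
    linear_combination ((-2) * tt * tt⁻¹ ^ 2 * q1 * q2) * hx + ((1) * tt * tt⁻¹ * q2 ^ 4 * q2⁻¹ ^ 2 * p2 ^ 2 + (-2) * ε⁻¹ * tt * tt⁻¹ * q2 ^ 3 * q2⁻¹ ^ 2 * p2 + (1) * ε⁻¹ ^ 2 * tt * tt⁻¹ * q2 ^ 2 * q2⁻¹ ^ 2 + (-1) * ε⁻¹ ^ 2 * q2 * q2⁻¹ + (1) * tt * tt⁻¹ * q1 ^ 4 * q1⁻¹ ^ 2 * p1 ^ 2 + (-2) * ε⁻¹ * tt * tt⁻¹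 * q1 ^ 3 * q1⁻¹ ^ 2 * p1 + (1) * ε⁻¹ ^ 2 * tt * tt⁻¹ * q1 ^ 2 * q1⁻¹ ^ 2 + (-1) * ε⁻¹ ^ 2 * q1 * q1⁻¹ + (2) * ε * tt⁻¹ * q1 ^ 2 * q2 * p1 + (-2) * tt⁻¹ * q1 * q2 + (1) * q1 ^ 3 * q1⁻¹ * p1 ^ 2 + (1) * q2 ^ 3 * q2⁻¹ * p2 ^ 2) * ht + ((1) * tt * tt⁻¹ * q1 ^ 3 * q1⁻¹ * p1 ^ 2 + (-2) * ε⁻¹ * tt * tt⁻¹ * q1 ^ 2 * q1⁻¹ * p1 + (1) * ε⁻¹ ^ 2 * tt * tt⁻¹ * q1 * q1⁻¹ + (-1) * ε⁻¹ ^ 2 + (1) * q1 ^ 2 * p1 ^ 2) * h1 + ((1) * tt * tt⁻¹ * q2 ^ 3 * q2⁻¹ * p2 ^ 2 + (-2) * ε⁻¹ * tt * tt⁻¹ * q2 ^ 2 * q2⁻¹ * p2 + (1) * ε⁻¹ ^ 2 * tt * tt⁻¹ * q2 * q2⁻¹ + (-1) * ε⁻¹ ^ 2 + (1) * q2 ^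 2 * p2 ^ 2) * h2
  have hcont : Filter.Tendsto
      (fun ε : ℂ => tHKSs_32_54 tt q1 p1 q2 p2 + ε * (2 * p1 * q1 ^ 2 * q2 / tt))
      (nhdsWithin 0 {ε : ℂ | ε ≠ 0}) (nhds (tHKSs_32_54 tt q1 p1 q2 p2)) := by
    have h : Filter.Tendsto
        (fun ε : ℂ => tHKSs_32_54 tt q1 p1 q2 p2 + ε * (2 * p1 * q1 ^ 2 * q2 / tt))
        (nhds 0)
        (nhds (tHKSs_32_54 tt q1 p1 q2 p2 + 0 * (2 * p1 * q1 ^ 2 * q2 / tt))) :=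
      tendsto_const_nhds.add (Filter.tendsto_id.mul tendsto_const_nhds)
    rw [zero_mul, add_zero] at h
    exact h.mono_left nhdsWithin_le_nhds
  refine hcont.congr' ?_
  filter_upwards [self_mem_nhdsWithin] with ε hε
  exact (key ε hε).symm
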